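/- arXiv:1706.04998 — 2 statements merged into one kernel-verified Lean document; each statement's English description precedes it below -/
import Mathlib

section
/- The family of harmonic-type functions separates points of K: for all x, y ∈ K with x ≠ y, there exist x0, x1, x2 ∈ ℝ and a harmonic-type function U : K → ℝ with boundary values (x0,x1,x2) such that U(x) ≠ U(y). -/
open MeasureTheory Filter Set
open scoped ENNReal NNReal Classical

noncomputable section

namespace SG

/-- The three vertices `p₀ = (0,0)`, `p₁ = (1,0)`, `p₂ = (1/2, √3/2)` viewed in `ℂ`. -/
def p : Fin 3 → ℂ := ![0, 1, 1/2 + (Real.sqrt 3 / 2) * Complex.I]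

/-- The three contraction maps `fᵢ x = (x + pᵢ)/2`. -/
def f (i : Fin 3) (x : ℂ) : ℂ := (x + p i) / 2

/-- `K` is the Sierpinski gasket: the (unique) nonempty compact set with
`K = f₀(K) ∪ f₁(K) ∪ f₂(K)`. -/
def IsSG (K : Set ℂ) : Prop :=
  K.Nonempty ∧ IsCompact K ∧ K = f 0 '' K ∪ f 1 '' K ∪ f 2 '' K

/-- `α = log 3 / log 2`. -/
def alpha : ℝ := Real.log 3 / Real.log 2

/-- `β* = log 5 / log 2`. -/
def betastar : ℝ := Real.log 5 / Real.log 2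

/-- The normalized `α`-dimensional Hausdorff measure restricted to `K`. -/
def nu (K : Set ℂ) : Measure ℂ :=
  ((Measure.hausdorffMeasure alpha : Measure ℂ) K)⁻¹ •
    (Measure.hausdorffMeasure alpha : Measure ℂ).restrict K

/-- `f_w` for a finite word `w` over `{0,1,2}` (empty word gives the identity). -/
def fwl : List (Fin 3) → ℂ → ℂ
  | [] => id
  | i :: t => f i ∘ fwl t

/-- `f_w` for a word `w ∈ W_n = {0,1,2}ⁿ`. -/
def fw {n : ℕ} (w : Fin n → Fin 3) : ℂ → ℂ := fwl (List.ofFn w)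

/-- The cell `K_w = f_w(K)`. -/
def Kw (K : Set ℂ) {n : ℕ} (w : Fin n → Fin 3) : Set ℂ := fw w '' K

/-- Adjacency `w⁽¹⁾ ∼ₙ w⁽²⁾`: distinct words with intersecting cells. -/
def Adj (K : Set ℂ) {n : ℕ} (w1 w2 : Fin n → Fin 3) : Prop :=
  w1 ≠ w2 ∧ (Kw K w1 ∩ Kw K w2).Nonempty

/-- `Pₙu(w) = ∫_K u(f_w(x)) ν(dx)`. -/
def P (K : Set ℂ) {n : ℕ} (u : ℂ → ℝ) (w : Fin n → Fin 3) : ℝ :=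
  ∫ x, u (fw w x) ∂(nu K)

/-- `Aₙ(u)`: sum over unordered adjacent pairs in `W_n` of `(Pₙu(w⁽¹⁾) − Pₙu(w⁽²⁾))²`
(written as half the sum over ordered pairs). -/
def A (K : Set ℂ) (n : ℕ) (u : ℂ → ℝ) : ℝ :=
  (1/2) * ∑ w1 : Fin n → Fin 3, ∑ w2 : Fin n → Fin 3,
    if Adj K w1 w2 then (P K u w1 - P K u w2)^2 else 0

/-- The remaining index of `{0,1,2}` besides `i` and `j` (when `i ≠ j`):
since `0+1+2 = 0` in `Fin 3`, it is `-(i+j)`. -/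
def other (i j : Fin 3) : Fin 3 := -(i + j)

/-- `U : K → ℝ` is harmonic-type with boundary values `(x0, x1, x2)`:
continuous on `K`, `U(pᵢ) = xᵢ`, and for every finite word `w` and distinct `i, j`
(with `k` the remaining index),
`U(f_w((pᵢ+pⱼ)/2)) = (2 U(f_w(pᵢ)) + 2 U(f_w(pⱼ)) + U(f_w(p_k)))/5`. -/
def IsHarm (K : Set ℂ) (x0 x1 x2 : ℝ) (U : ℂ → ℝ) : Prop :=
  ContinuousOn U K ∧ U (p 0) = x0 ∧ U (p 1) = x1 ∧ U (p 2) = x2 ∧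
  ∀ (w : List (Fin 3)) (i j : Fin 3), i ≠ j →
    U (fwl w ((p i + p j) / 2)) =
      (2 * U (fwl w (p i)) + 2 * U (fwl w (p j)) + U (fwl w (p (other i j)))) / 5

open Topology

/-! ### auxiliary development -/


lemma fin3cases (j : Fin 3) : j = 0 ∨ j = 1 ∨ j = 2 := by omega

def e : Fin 3 → Fin 3 → ℝ := fun a j => if j = a then 1 else 0

def entry (a k j : Fin 3) : ℝ :=
  if k = a then (if j = a then 1 else 0) else if j = a ∨ j = k then 2/5 else 1/5

def Mt (a : Fin 3) (u : Fin 3 → ℝ) : Fin 3 → ℝ := fun j => ∑ k, entry a k j * u k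

def inDelta (u : Fin 3 → ℝ) : Prop := (∀ j, 0 ≤ u j) ∧ u 0 + u 1 + u 2 = 1

lemma entry_nonneg (a k j : Fin 3) : 0 ≤ entry a k j := by
  unfold entry; split_ifs <;> norm_num

lemma entry_rowsum (a k : Fin 3) : entry a k 0 + entry a k 1 + entry a k 2 = 1 := by
  rcases fin3cases a with rfl|rfl|rfl <;> rcases fin3cases k with rfl|rfl|rfl <;>
    simp (config := {decide := true}) [entry] <;> norm_num

lemma entry_symm (a b j : Fin 3) : entry a b j = entry b a j := by
  rcases fin3cases a with rfl|rfl|rfl <;> rcases fin3cases b with rfl|rfl|rfl <;>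
    rcases fin3cases j with rfl|rfl|rfl <;> simp (config := {decide := true}) [entry]

lemma Mt_apply (a : Fin 3) (u : Fin 3 → ℝ) (j : Fin 3) :
    Mt a u j = entry a 0 j * u 0 + entry a 1 j * u 1 + entry a 2 j * u 2 := by
  simp [Mt, Fin.sum_univ_three]

lemma Mt_delta {a : Fin 3} {u : Fin 3 → ℝ} (hu : inDelta u) : inDelta (Mt a u) := by
  constructor
  · intro j
    rw [Mt_apply]
    have := hu.1 0; have := hu.1 1; have := hu.1 2
    have := entry_nonneg a 0 j; have := entry_nonneg a 1 j; have := entry_nonneg a 2 j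
    positivity
  · have h0 := entry_rowsum a 0; have h1 := entry_rowsum a 1; have h2 := entry_rowsum a 2
    have hs := hu.2
    rw [Mt_apply, Mt_apply, Mt_apply]
    linear_combination u 0 * h0 + u 1 * h1 + u 2 * h2 + hs

lemma Mt_sub (a : Fin 3) (u v : Fin 3 → ℝ) (j : Fin 3) :
    Mt a u j - Mt a v j = Mt a (fun k => u k - v k) j := by
  rw [Mt_apply, Mt_apply, Mt_apply]; ring

lemma Mt_contract (a : Fin 3) (w : Fin 3 → ℝ) (C : ℝ)
    (hs : w 0 + w 1 + w 2 = 0) (h0 : |w 0| ≤ C) (h1 : |w 1| ≤ C) (h2 : |w 2| ≤ C)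
    (j : Fin 3) : |Mt a w j| ≤ 3/5 * C := by
  rw [abs_le] at h0 h1 h2 ⊢
  rw [Mt_apply]
  rcases fin3cases a with rfl|rfl|rfl <;> rcases fin3cases j with rfl|rfl|rfl <;>
    simp (config := {decide := true}) [entry] <;> constructor <;> linarith

lemma Mt_inj {a : Fin 3} {u v : Fin 3 → ℝ} (h : Mt a u = Mt a v) : u = v := by
  have h0 := congrFun h 0; have h1 := congrFun h 1; have h2 := congrFun h 2
  rw [Mt_apply, Mt_apply] at h0 h1 h2
  funext j
  rcases fin3cases a with rfl|rfl|rfl <;>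
    simp (config := {decide := true}) [entry] at h0 h1 h2 <;>
    rcases fin3cases j with rfl|rfl|rfl <;> linarith

lemma Mt_e (a b j : Fin 3) : Mt a (e b) j = entry a b j := by
  rw [Mt_apply]
  rcases fin3cases b with rfl|rfl|rfl <;> simp (config := {decide := true}) [e]

lemma Mt_e_self (a : Fin 3) : Mt a (e a) = e a := by
  funext j; rw [Mt_e]
  rcases fin3cases a with rfl|rfl|rfl <;> rcases fin3cases j with rfl|rfl|rfl <;>
    simp (config := {decide := true}) [entry, e]

lemma Mt_symm (a b : Fin 3) : Mt a (e b) = Mt b (e a) := by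
  funext j; rw [Mt_e, Mt_e, entry_symm]

lemma Mt_fixed {a : Fin 3} {u : Fin 3 → ℝ} (hu : inDelta u) (h : Mt a u = u) : u = e a := by
  have h0 := congrFun h 0; have h1 := congrFun h 1; have h2 := congrFun h 2
  rw [Mt_apply] at h0 h1 h2
  have hs := hu.2
  funext j
  rcases fin3cases a with rfl|rfl|rfl <;>
    simp (config := {decide := true}) [entry] at h0 h1 h2 <;>
    rcases fin3cases j with rfl|rfl|rfl <;>
    simp (config := {decide := true}) [e] <;> linarith

lemma inDelta_e (a : Fin 3) : inDelta (e a) := by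
  constructor
  · intro j; unfold e; split_ifs <;> norm_num
  · rcases fin3cases a with rfl|rfl|rfl <;> simp (config := {decide := true}) [e]

lemma comp_le_one {u : Fin 3 → ℝ} (hu : inDelta u) (j : Fin 3) : u j ≤ 1 := by
  have := hu.1 0; have := hu.1 1; have := hu.1 2; have := hu.2
  rcases fin3cases j with rfl|rfl|rfl <;> linarith

lemma Mt_diag {a : Fin 3} (u : Fin 3 → ℝ) (hs : u 0 + u 1 + u 2 = 1) :
    Mt a u a = 2/5 + 3/5 * u a := by
  rw [Mt_apply]
  rcases fin3cases a with rfl|rfl|rfl <;>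
    simp (config := {decide := true}) [entry] <;> linarith

lemma Mt_off {a c : Fin 3} (h : a ≠ c) (u : Fin 3 → ℝ) :
    Mt c u a = (2 * u a + u (other a c))/5 := by
  rw [Mt_apply]
  rcases fin3cases a with rfl|rfl|rfl <;> rcases fin3cases c with rfl|rfl|rfl <;>
    first
      | exact absurd rfl h
      | (simp (config := {decide := true}) [entry, show other 0 1 = 2 from rfl,
          show other 1 0 = 2 from rfl, show other 0 2 = 1 from rfl,
          show other 2 0 = 1 from rfl, show other 1 2 = 0 from rfl,
          show other 2 1 = 0 from rfl] ; ring)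

lemma other_cases {a b : Fin 3} (h : a ≠ b) (j : Fin 3) : j = a ∨ j = b ∨ j = other a b := by
  revert h; revert j a b; decide

lemma other_ne {a b : Fin 3} (h : a ≠ b) : other a b ≠ a ∧ other a b ≠ b := by
  revert h; revert a b; decide

lemma entry_mid {i j : Fin 3} (h : i ≠ j) (k : Fin 3) :
    entry i j k = (2 * e i k + 2 * e j k + e (other i j) k)/5 := by
  revert h; rcases fin3cases i with rfl|rfl|rfl <;> rcases fin3cases j with rfl|rfl|rfl <;>
    intro h <;>
    first
      | exact absurd rfl h
      | (rcases fin3cases k with rfl|rfl|rfl <;>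
          simp (config := {decide := true}) [entry, e, other] <;> norm_num)
/-! ### geometry -/


def sq3 : ℝ := Real.sqrt 3

lemma sq3_pos : 0 < sq3 := Real.sqrt_pos.2 (by norm_num)
lemma sq3_le_two : sq3 ≤ 2 := by
  have h : Real.sqrt 3 ≤ Real.sqrt 4 := Real.sqrt_le_sqrt (by norm_num)
  have h4 : Real.sqrt 4 = 2 := by
    rw [show (4:ℝ) = 2^2 by norm_num, Real.sqrt_sq (by norm_num : (0:ℝ) ≤ 2)]
  rw [sq3]; linarith

def Tri : Set ℂ :=
  {z | 0 ≤ z.im ∧ z.im ≤ sq3 * z.re ∧ z.im ≤ sq3 * (1 - z.re)}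

lemma p0_def : p 0 = 0 := rfl
lemma p1_def : p 1 = 1 := rfl
lemma p0_re : (p 0).re = 0 := by simp [p]
lemma p0_im : (p 0).im = 0 := by simp [p]
lemma p1_re : (p 1).re = 1 := by simp [p]
lemma p1_im : (p 1).im = 0 := by simp [p]
lemma p2_re : (p 2).re = 1/2 := by simp [p]
lemma p2_im : (p 2).im = sq3/2 := by simp [p, sq3]

lemma p_inj {i j : Fin 3} (h : p i = p j) : i = j := by
  have h3 := sq3_pos
  rcases (by omega : i = 0 ∨ i = 1 ∨ i = 2) with rfl|rfl|rfl <;>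
    rcases (by omega : j = 0 ∨ j = 1 ∨ j = 2) with rfl|rfl|rfl <;>
    first
      | rfl
      | (exfalso; rw [Complex.ext_iff] at h
         simp only [p0_re, p0_im, p1_re, p1_im, p2_re, p2_im] at h
         obtain ⟨h1, h2⟩ := h; linarith)

lemma mem_Tri {z : ℂ} : z ∈ Tri ↔ 0 ≤ z.im ∧ z.im ≤ sq3 * z.re ∧ z.im ≤ sq3 * (1 - z.re) :=
  Iff.rfl

lemma Tri_re_nonneg {z : ℂ} (hz : z ∈ Tri) : 0 ≤ z.re := by
  obtain ⟨h1, h2, h3⟩ := hz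
  nlinarith [sq3_pos]

lemma Tri_re_le_one {z : ℂ} (hz : z ∈ Tri) : z.re ≤ 1 := by
  obtain ⟨h1, h2, h3⟩ := hz
  nlinarith [sq3_pos]

lemma Tri_im_le {z : ℂ} (hz : z ∈ Tri) : z.im ≤ 2 := by
  have h0 := Tri_re_nonneg hz
  obtain ⟨h1, h2, h3⟩ := hz
  nlinarith [sq3_pos, sq3_le_two]

lemma Tri_dist_le {z w : ℂ} (hz : z ∈ Tri) (hw : w ∈ Tri) : dist z w ≤ 6 := by
  rw [Complex.dist_eq]
  calc ‖z - w‖ ≤ |(z-w).re| + |(z-w).im| := Complex.norm_le_abs_re_add_abs_im _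
    _ ≤ 6 := by
        rw [Complex.sub_re, Complex.sub_im]
        have := Tri_re_nonneg hz; have := Tri_re_le_one hz
        have := Tri_re_nonneg hw; have := Tri_re_le_one hw
        have := Tri_im_le hz; have := Tri_im_le hw
        have := hz.1; have := hw.1
        have hz1 : |z.re - w.re| ≤ 1 := by rw [abs_le]; constructor <;> linarith
        have hz2 : |z.im - w.im| ≤ 2 := by rw [abs_le]; constructor <;> linarith
        linarith

lemma div2_re (w : ℂ) : (w/2).re = w.re/2 := by
  rw [show (2:ℂ) = ((2:ℝ):ℂ) by norm_num, Complex.div_ofReal_re]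
lemma div2_im (w : ℂ) : (w/2).im = w.im/2 := by
  rw [show (2:ℂ) = ((2:ℝ):ℂ) by norm_num, Complex.div_ofReal_im]

lemma f_re (i : Fin 3) (z : ℂ) : (f i z).re = (z.re + (p i).re)/2 := by
  simp [f, div2_re]
lemma f_im (i : Fin 3) (z : ℂ) : (f i z).im = (z.im + (p i).im)/2 := by
  simp [f, div2_im]

lemma f_maps_Tri {z : ℂ} (hz : z ∈ Tri) (i : Fin 3) : f i z ∈ Tri := by
  obtain ⟨h1, h2, h3⟩ := hz
  have hre : 0 ≤ z.re := Tri_re_nonneg ⟨h1, h2, h3⟩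
  have hre1 : z.re ≤ 1 := Tri_re_le_one ⟨h1, h2, h3⟩
  have h3p := sq3_pos
  rw [mem_Tri, f_re, f_im]
  rcases (by omega : i = 0 ∨ i = 1 ∨ i = 2) with rfl|rfl|rfl <;>
    simp only [p0_re, p0_im, p1_re, p1_im, p2_re, p2_im] <;>
    exact ⟨by linarith, by nlinarith, by nlinarith⟩

lemma p_mem_Tri (i : Fin 3) : p i ∈ Tri := by
  have h3p := sq3_pos
  rcases (by omega : i = 0 ∨ i = 1 ∨ i = 2) with rfl|rfl|rfl <;>
    rw [mem_Tri] <;>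
    simp only [p0_re, p0_im, p1_re, p1_im, p2_re, p2_im] <;>
    exact ⟨by nlinarith, by nlinarith, by nlinarith⟩

def g (i : Fin 3) (x : ℂ) : ℂ := 2*x - p i

lemma g_f (i : Fin 3) (z : ℂ) : g i (f i z) = z := by unfold g f; ring
lemma f_g (i : Fin 3) (x : ℂ) : f i (g i x) = x := by unfold g f; ring
lemma g_re (i : Fin 3) (x : ℂ) : (g i x).re = 2*x.re - (p i).re := by simp [g]
lemma g_im (i : Fin 3) (x : ℂ) : (g i x).im = 2*x.im - (p i).im := by simp [g]

private lemma touch01 {x : ℂ} (ha : g 0 x ∈ Tri) (hb : g 1 x ∈ Tri) :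
    g 0 x = p 1 ∧ g 1 x = p 0 := by
  have h3 := sq3_pos
  rw [mem_Tri, g_re, g_im] at ha hb
  simp only [p0_re, p0_im, p1_re, p1_im, p2_re, p2_im] at ha hb
  obtain ⟨a1, a2, a3⟩ := ha; obtain ⟨b1, b2, b3⟩ := hb
  set u := x.re; set v := x.im
  have hv : v = 0 := by linarith
  rw [hv] at a3 b2
  have hu1 : 2*u - 1 ≤ 0 := by nlinarith
  have hu2 : 0 ≤ 2*u - 1 := by nlinarith
  constructor <;> (rw [Complex.ext_iff, g_re, g_im] <;>
    simp only [p0_re, p0_im, p1_re, p1_im, p2_re, p2_im]) <;>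
    exact ⟨by linarith, by linarith⟩

private lemma touch02 {x : ℂ} (ha : g 0 x ∈ Tri) (hb : g 2 x ∈ Tri) :
    g 0 x = p 2 ∧ g 2 x = p 0 := by
  have h3 := sq3_pos
  rw [mem_Tri, g_re, g_im] at ha hb
  simp only [p0_re, p0_im, p1_re, p1_im, p2_re, p2_im] at ha hb
  obtain ⟨a1, a2, a3⟩ := ha; obtain ⟨b1, b2, b3⟩ := hb
  set u := x.re; set v := x.im
  -- b1 : 0 ≤ 2v - s/2 ; a3 : 2v ≤ s(1 - 2u) ; a2 : 2v ≤ s(2u)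
  have hu1 : u ≤ 1/4 := by nlinarith
  have hu2 : 1/4 ≤ u := by nlinarith
  have hu : u = 1/4 := le_antisymm hu1 hu2
  rw [hu] at a3
  have hv1 : 2*v ≤ sq3/2 := by nlinarith
  have hv : v = sq3/4 := by linarith
  constructor <;> (rw [Complex.ext_iff, g_re, g_im] <;>
    simp only [p0_re, p0_im, p1_re, p1_im, p2_re, p2_im]) <;>
    exact ⟨by linarith, by linarith⟩

private lemma touch12 {x : ℂ} (ha : g 1 x ∈ Tri) (hb : g 2 x ∈ Tri) :
    g 1 x = p 2 ∧ g 2 x = p 1 := by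
  have h3 := sq3_pos
  rw [mem_Tri, g_re, g_im] at ha hb
  simp only [p0_re, p0_im, p1_re, p1_im, p2_re, p2_im] at ha hb
  obtain ⟨a1, a2, a3⟩ := ha; obtain ⟨b1, b2, b3⟩ := hb
  set u := x.re; set v := x.im
  -- a2 : 2v ≤ s(2u - 1); a3 : 2v ≤ s(1 - (2u - 1)) = s(2 - 2u); b1 : 0 ≤ 2v - s/2
  have hu1 : u ≤ 3/4 := by nlinarith
  have hu2 : 3/4 ≤ u := by nlinarith
  have hu : u = 3/4 := le_antisymm hu1 hu2
  rw [hu] at a2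
  have hv1 : 2*v ≤ sq3/2 := by nlinarith
  have hv : v = sq3/4 := by linarith
  constructor <;> (rw [Complex.ext_iff, g_re, g_im] <;>
    simp only [p0_re, p0_im, p1_re, p1_im, p2_re, p2_im]) <;>
    exact ⟨by linarith, by linarith⟩

lemma touch {a b : Fin 3} (hab : a ≠ b) {x : ℂ}
    (ha : g a x ∈ Tri) (hb : g b x ∈ Tri) : g a x = p b ∧ g b x = p a := by
  revert hab
  rcases (by omega : a = 0 ∨ a = 1 ∨ a = 2) with rfl|rfl|rfl <;>
    rcases (by omega : b = 0 ∨ b = 1 ∨ b = 2) with rfl|rfl|rfl <;> intro hab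
  · exact absurd rfl hab
  · exact touch01 ha hb
  · exact touch02 ha hb
  · exact ⟨(touch01 hb ha).2, (touch01 hb ha).1⟩
  · exact absurd rfl hab
  · exact touch12 ha hb
  · exact ⟨(touch02 hb ha).2, (touch02 hb ha).1⟩
  · exact ⟨(touch12 hb ha).2, (touch12 hb ha).1⟩
  · exact absurd rfl hab


/-! ### the iteration -/

def Step (L : ℂ → Fin 3 → ℝ) (x : ℂ) : Fin 3 → ℝ :=
  if g 0 x ∈ Tri then Mt 0 (L (g 0 x))
  else if g 1 x ∈ Tri then Mt 1 (L (g 1 x))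
  else if g 2 x ∈ Tri then Mt 2 (L (g 2 x))
  else e 0

def Good (L : ℂ → Fin 3 → ℝ) : Prop :=
  (∀ x, inDelta (L x)) ∧ (∀ i, L (p i) = e i)

lemma g_p_self (i : Fin 3) : g i (p i) = p i := by unfold g; ring

lemma g_p_mem {i b : Fin 3} (h : g b (p i) ∈ Tri) : b = i := by
  by_contra hb
  have hi : g i (p i) ∈ Tri := by rw [g_p_self]; exact p_mem_Tri i
  obtain ⟨-, h2⟩ := touch hb h hi
  rw [g_p_self] at h2
  exact hb (p_inj h2).symm

lemma Step_branch {L : ℂ → Fin 3 → ℝ} (hL : ∀ i, L (p i) = e i) {c : Fin 3} {x : ℂ}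
    (hc : g c x ∈ Tri) : Step L x = Mt c (L (g c x)) := by
  unfold Step
  split_ifs with h0 h1 h2
  · by_cases hc0 : c = 0
    · subst hc0; rfl
    · obtain ⟨e1, e2⟩ := touch (Ne.symm (Ne.intro hc0) : (0:Fin 3) ≠ c) h0 hc
      rw [e1, e2, hL, hL, Mt_symm]
  · by_cases hc1 : c = 1
    · subst hc1; rfl
    · obtain ⟨e1, e2⟩ := touch (Ne.symm (Ne.intro hc1) : (1:Fin 3) ≠ c) h1 hc
      rw [e1, e2, hL, hL, Mt_symm]
  · by_cases hc2 : c = 2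
    · subst hc2; rfl
    · obtain ⟨e1, e2⟩ := touch (Ne.symm (Ne.intro hc2) : (2:Fin 3) ≠ c) h2 hc
      rw [e1, e2, hL, hL, Mt_symm]
  · rcases fin3cases c with rfl|rfl|rfl <;> contradiction

lemma Step_good {L : ℂ → Fin 3 → ℝ} (hL : Good L) : Good (Step L) := by
  constructor
  · intro x; unfold Step
    split_ifs <;> first | exact Mt_delta (hL.1 _) | exact inDelta_e 0
  · intro i
    have h : g i (p i) ∈ Tri := by rw [g_p_self]; exact p_mem_Tri i
    rw [Step_branch hL.2 h, g_p_self, hL.2, Mt_e_self]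

lemma Step_contract {L L' : ℂ → Fin 3 → ℝ} (hL : Good L) (hL' : Good L') {C : ℝ}
    (h : ∀ y k, |L y k - L' y k| ≤ C) (x : ℂ) (k : Fin 3) :
    |Step L x k - Step L' x k| ≤ 3/5 * C := by
  have hC : 0 ≤ C := le_trans (abs_nonneg _) (h 0 0)
  have key : ∀ (c : Fin 3) (y : ℂ), |Mt c (L y) k - Mt c (L' y) k| ≤ 3/5 * C := by
    intro c y
    rw [Mt_sub]
    refine Mt_contract c _ C ?_ (h y 0) (h y 1) (h y 2) k
    have ha := (hL.1 y).2; have hb := (hL'.1 y).2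
    show (L y 0 - L' y 0) + (L y 1 - L' y 1) + (L y 2 - L' y 2) = 0
    linarith
  unfold Step
  split_ifs <;> first | exact key _ _ | (rw [sub_self, abs_zero]; positivity)

/-! ### the initial function -/

def sig (i : Fin 3) (x : ℂ) : ℝ := max 0 (1 - 4 * ‖x - p i‖)

lemma sig_cont (i : Fin 3) : Continuous (sig i) := by
  apply continuous_const.max
  exact continuous_const.sub (continuous_const.mul (continuous_norm.comp
    (continuous_id.sub continuous_const)))

lemma sig_nonneg (i : Fin 3) (x : ℂ) : 0 ≤ sig i x := le_max_left _ _
lemma sig_le_one (i : Fin 3) (x : ℂ) : sig i x ≤ 1 :=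
  max_le (by norm_num) (by nlinarith [norm_nonneg (x - p i)])
lemma sig_self (i : Fin 3) : sig i (p i) = 1 := by simp [sig]

lemma sq3_sq : sq3^2 = 3 := Real.sq_sqrt (by norm_num)

lemma dist_p {i j : Fin 3} (h : i ≠ j) : ‖p i - p j‖ = 1 := by
  have hsq := sq3_sq
  revert h
  rcases fin3cases i with rfl|rfl|rfl <;> rcases fin3cases j with rfl|rfl|rfl <;> intro h <;>
    first
      | exact absurd rfl h
      | (rw [Complex.norm_def, Complex.normSq_apply]
         simp only [Complex.sub_re, Complex.sub_im, p0_re, p0_im, p1_re, p1_im, p2_re, p2_im]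
         rw [show ((0:ℝ) - 1) * (0 - 1) + (0 - 0) * (0 - 0) = (1:ℝ) by ring]
         exact Real.sqrt_one)
      | (rw [Complex.norm_def, Complex.normSq_apply]
         simp only [Complex.sub_re, Complex.sub_im, p0_re, p0_im, p1_re, p1_im, p2_re, p2_im]
         have harg : ∀ E : ℝ, E = 1 → Real.sqrt E = 1 := fun E hE => by rw [hE]; exact Real.sqrt_one
         apply harg; nlinarith)

lemma sig_other {i j : Fin 3} (h : i ≠ j) : sig i (p j) = 0 := by
  have : ‖p j - p i‖ = 1 := dist_p (Ne.symm h)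
  simp [sig, this]

lemma sig_disj (x : ℂ) : sig 1 x = 0 ∨ sig 2 x = 0 := by
  by_contra hcon
  push_neg at hcon
  have gen : ∀ i : Fin 3, sig i x ≠ 0 → 0 < 1 - 4 * ‖x - p i‖ := by
    intro i hi
    by_contra hn; push_neg at hn
    exact hi (by rw [sig]; exact max_eq_left hn)
  have h1 := gen 1 hcon.1
  have h2 := gen 2 hcon.2
  have htri : ‖p 1 - p 2‖ ≤ ‖p 1 - x‖ + ‖x - p 2‖ := by
    simpa using norm_sub_le_norm_sub_add_norm_sub (p 1) x (p 2)
  rw [dist_p (by decide : (1:Fin 3) ≠ 2)] at htri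
  rw [show p 1 - x = -(x - p 1) by ring, norm_neg] at htri
  linarith

lemma sig_eq (x : ℂ) : sig 1 x + sig 2 x ≤ 1 := by
  rcases sig_disj x with h|h <;> rw [h] <;>
    first | (simpa using sig_le_one 2 x) | (simpa using sig_le_one 1 x)

def L0 (x : ℂ) : Fin 3 → ℝ :=
  fun j => e 0 j + sig 1 x * (e 1 j - e 0 j) + sig 2 x * (e 2 j - e 0 j)

lemma L0_good : Good L0 := by
  constructor
  · intro x
    have h1 := sig_nonneg 1 x; have h2 := sig_nonneg 2 x
    have h3 := sig_eq x
    constructor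
    · intro j
      rcases fin3cases j with rfl|rfl|rfl <;>
        simp (config := {decide := true}) [L0, e] <;> linarith
    · simp (config := {decide := true}) [L0, e]; ring
  · intro i
    funext j
    rcases fin3cases i with rfl|rfl|rfl <;>
      simp [L0, sig_self, sig_other, (by decide : (1:Fin 3) ≠ 0), (by decide : (2:Fin 3) ≠ 0),
        (by decide : (1:Fin 3) ≠ 2), (by decide : (2:Fin 3) ≠ 1)] <;> ring

lemma L0_cont (j : Fin 3) : Continuous (fun x => L0 x j) := by
  unfold L0
  exact (continuous_const.add ((sig_cont 1).mul continuous_const)).add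
    ((sig_cont 2).mul continuous_const)

/-! ### iterates and the limit -/

def Lseq : ℕ → ℂ → Fin 3 → ℝ := fun n => Step^[n] L0

lemma Lseq_succ (n : ℕ) : Lseq (n+1) = Step (Lseq n) :=
  Function.iterate_succ_apply' Step n L0

lemma Lseq_good (n : ℕ) : Good (Lseq n) := by
  induction n with
  | zero => exact L0_good
  | succ n ih => rw [Lseq_succ]; exact Step_good ih

lemma Lseq_diff (n : ℕ) (x : ℂ) (k : Fin 3) :
    |Lseq (n+1) x k - Lseq n x k| ≤ (3/5)^n := by
  induction n generalizing x k with
  | zero =>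
    have ha := (Lseq_good 1).1 x
    have hb := (Lseq_good 0).1 x
    have := ha.1 k; have := hb.1 k
    have := comp_le_one ha k; have := comp_le_one hb k
    rw [pow_zero, abs_le]; constructor <;> linarith
  | succ n ih =>
    have h := Step_contract (Lseq_good (n+1)) (Lseq_good n) (fun y k => ih y k) x k
    rw [← Lseq_succ n] at h
    rw [← Lseq_succ (n+1)] at h
    have hp : (3:ℝ)/5 * (3/5)^n = (3/5)^(n+1) := by rw [pow_succ]; ring
    linarith

lemma Lseq_cauchy (x : ℂ) (k : Fin 3) : CauchySeq (fun n => Lseq n x k) := by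
  apply cauchySeq_of_le_geometric (3/5) 1 (by norm_num)
  intro n
  rw [Real.dist_eq, one_mul, abs_sub_comm]
  exact Lseq_diff n x k

def Lstar (x : ℂ) (k : Fin 3) : ℝ := limUnder atTop (fun n => Lseq n x k)

lemma Lstar_tendsto (x : ℂ) (k : Fin 3) :
    Tendsto (fun n => Lseq n x k) atTop (𝓝 (Lstar x k)) :=
  (Lseq_cauchy x k).tendsto_limUnder

lemma Lstar_tail (n : ℕ) (x : ℂ) (k : Fin 3) :
    |Lseq n x k - Lstar x k| ≤ (3/5)^n * (5/2) := by
  have h := dist_le_of_le_geometric_of_tendsto (3/5) 1 (by norm_num : (3:ℝ)/5 < 1)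
    (fun m => by rw [Real.dist_eq, one_mul, abs_sub_comm]; exact Lseq_diff m x k)
    (Lstar_tendsto x k) n
  rw [Real.dist_eq] at h
  calc |Lseq n x k - Lstar x k| ≤ 1 * (3/5)^n / (1 - 3/5) := h
    _ = (3/5)^n * (5/2) := by ring

lemma Lstar_delta (x : ℂ) : inDelta (Lstar x) := by
  constructor
  · intro k
    exact ge_of_tendsto (Lstar_tendsto x k)
      (Eventually.of_forall fun n => ((Lseq_good n).1 x).1 k)
  · have h1 : Tendsto (fun n => Lseq n x 0 + Lseq n x 1 + Lseq n x 2) atTop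
        (𝓝 (Lstar x 0 + Lstar x 1 + Lstar x 2)) :=
      ((Lstar_tendsto x 0).add (Lstar_tendsto x 1)).add (Lstar_tendsto x 2)
    have h2 : (fun n => Lseq n x 0 + Lseq n x 1 + Lseq n x 2) = fun _ => 1 := by
      funext n; exact ((Lseq_good n).1 x).2
    rw [h2] at h1
    exact tendsto_nhds_unique h1 tendsto_const_nhds

lemma Step_Lstar : ∀ x, Step Lstar x = Lstar x := by
  intro x
  funext k
  have h1 : Tendsto (fun n => Step (Lseq n) x k) atTop (𝓝 (Step Lstar x k)) := by
    unfold Step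
    split_ifs
    · simp only [Mt_apply]
      exact (((Lstar_tendsto _ 0).const_mul _).add ((Lstar_tendsto _ 1).const_mul _)).add
        ((Lstar_tendsto _ 2).const_mul _)
    · simp only [Mt_apply]
      exact (((Lstar_tendsto _ 0).const_mul _).add ((Lstar_tendsto _ 1).const_mul _)).add
        ((Lstar_tendsto _ 2).const_mul _)
    · simp only [Mt_apply]
      exact (((Lstar_tendsto _ 0).const_mul _).add ((Lstar_tendsto _ 1).const_mul _)).add
        ((Lstar_tendsto _ 2).const_mul _)
    · exact tendsto_const_nhds
  have h2 : (fun n => Step (Lseq n) x k) = fun n => Lseq (n+1) x k := by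
    funext n; rw [Lseq_succ]
  rw [h2] at h1
  have h3 : Tendsto (fun n => Lseq (n+1) x k) atTop (𝓝 (Lstar x k)) :=
    (Lstar_tendsto x k).comp (tendsto_add_atTop_nat 1)
  exact (tendsto_nhds_unique h1 h3)

lemma Lstar_pin (i : Fin 3) : Lstar (p i) = e i := by
  have hfix : Mt i (Lstar (p i)) = Lstar (p i) := by
    have h := Step_Lstar (p i)
    have hi : g i (p i) ∈ Tri := by rw [g_p_self]; exact p_mem_Tri i
    rcases fin3cases i with rfl|rfl|rfl
    · rw [Step, if_pos hi, g_p_self] at h; exact h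
    · rw [Step, if_neg (fun hc => by exact absurd (g_p_mem hc) (by decide)),
        if_pos hi, g_p_self] at h; exact h
    · rw [Step, if_neg (fun hc => by exact absurd (g_p_mem hc) (by decide)),
        if_neg (fun hc => by exact absurd (g_p_mem hc) (by decide)),
        if_pos hi, g_p_self] at h; exact h
  exact Mt_fixed (Lstar_delta (p i)) hfix

lemma Lstar_branch {c : Fin 3} {x : ℂ} (hc : g c x ∈ Tri) :
    Lstar x = Mt c (Lstar (g c x)) := by
  rw [← Step_Lstar x, Step_branch Lstar_pin hc]

lemma Lstar_f (c : Fin 3) {z : ℂ} (hz : z ∈ Tri) :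
    Lstar (f c z) = Mt c (Lstar z) := by
  have hc : g c (f c z) ∈ Tri := by rw [g_f]; exact hz
  rw [Lstar_branch hc, g_f]

/-! ### basic facts about K -/

lemma f_fix (i : Fin 3) : f i (p i) = p i := by unfold f; ring

lemma f_dist (c : Fin 3) (z w : ℂ) : dist (f c z) (f c w) = dist z w / 2 := by
  rw [Complex.dist_eq, Complex.dist_eq, show f c z - f c w = (z - w)/2 by unfold f; ring,
    norm_div, Complex.norm_two]

lemma g_cont (a : Fin 3) : Continuous (g a) := by
  unfold g; exact (continuous_const.mul continuous_id).sub continuous_const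

lemma Tri_closed : IsClosed Tri := by
  have : Tri = {z : ℂ | 0 ≤ z.im} ∩ ({z : ℂ | z.im ≤ sq3 * z.re} ∩
      {z : ℂ | z.im ≤ sq3 * (1 - z.re)}) := rfl
  rw [this]
  refine (isClosed_le continuous_const Complex.continuous_im).inter
    ((isClosed_le Complex.continuous_im (continuous_const.mul Complex.continuous_re)).inter
      (isClosed_le Complex.continuous_im (continuous_const.mul
        (continuous_const.sub Complex.continuous_re))))

lemma Tri_zero : (0:ℂ) ∈ Tri := by
  rw [mem_Tri]
  refine ⟨by simp, by simp, by simp [sq3_pos.le]⟩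

lemma Tri_compact : IsCompact Tri := by
  apply Metric.isCompact_of_isClosed_isBounded Tri_closed
  apply (Metric.isBounded_closedBall (x := (0:ℂ)) (r := 6)).subset
  intro z hz
  rw [Metric.mem_closedBall]
  have := Tri_dist_le hz Tri_zero
  simpa using this

section K
variable {K : Set ℂ} (hK : IsSG K)
include hK

lemma K_map (a : Fin 3) {w : ℂ} (hw : w ∈ K) : f a w ∈ K := by
  have : f a w ∈ f 0 '' K ∪ f 1 '' K ∪ f 2 '' K := by
    rcases fin3cases a with rfl|rfl|rfl
    · exact Or.inl (Or.inl ⟨w, hw, rfl⟩)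
    · exact Or.inl (Or.inr ⟨w, hw, rfl⟩)
    · exact Or.inr ⟨w, hw, rfl⟩
  rwa [← hK.2.2] at this

lemma K_cover {z : ℂ} (hz : z ∈ K) : ∃ c w, w ∈ K ∧ z = f c w := by
  rw [hK.2.2] at hz
  rcases hz with (⟨w, hw, hfw⟩|⟨w, hw, hfw⟩)|⟨w, hw, hfw⟩
  · exact ⟨0, w, hw, hfw.symm⟩
  · exact ⟨1, w, hw, hfw.symm⟩
  · exact ⟨2, w, hw, hfw.symm⟩

lemma p_mem_K (i : Fin 3) : p i ∈ K := by
  obtain ⟨z₀, hz₀⟩ := hK.1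
  have hseq : ∀ n, (f i)^[n] z₀ ∈ K := by
    intro n; induction n with
    | zero => exact hz₀
    | succ n ih => rw [Function.iterate_succ_apply']; exact K_map hK i ih
  have hdist : ∀ n, dist ((f i)^[n] z₀) (p i) = dist z₀ (p i) / 2^n := by
    intro n; induction n with
    | zero => simp
    | succ n ih =>
      rw [Function.iterate_succ_apply', show p i = f i (p i) from (f_fix i).symm]
      rw [f_dist, f_fix, ih, pow_succ]
      ring
  have hlim : Tendsto (fun n => (f i)^[n] z₀) atTop (𝓝 (p i)) := by
    rw [tendsto_iff_dist_tendsto_zero]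
    simp only [hdist]
    have h1 : Tendsto (fun n : ℕ => (1/2:ℝ)^n) atTop (𝓝 0) :=
      tendsto_pow_atTop_nhds_zero_of_lt_one (by norm_num) (by norm_num)
    have := h1.const_mul (dist z₀ (p i))
    rw [mul_zero] at this
    convert this using 2 with n
    rw [div_pow, one_pow]
    ring
  exact hK.2.1.isClosed.mem_of_tendsto hlim (Eventually.of_forall hseq)

lemma K_sub_Tri : K ⊆ Tri := by
  have hcont : Continuous fun x : ℂ => Metric.infDist x Tri := Metric.continuous_infDist_pt Tri
  obtain ⟨x₀, hx₀K, hmax⟩ := hK.2.1.exists_isMaxOn hK.1 hcont.continuousOn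
  obtain ⟨c, w, hwK, hxe⟩ := K_cover hK hx₀K
  obtain ⟨t, htT, hdt⟩ := Tri_compact.exists_infDist_eq_dist ⟨0, Tri_zero⟩ w
  have h1 : Metric.infDist x₀ Tri ≤ dist (f c w) (f c t) := by
    rw [hxe]; exact Metric.infDist_le_dist_of_mem (f_maps_Tri htT c)
  rw [f_dist, ← hdt] at h1
  have h2 : Metric.infDist w Tri ≤ Metric.infDist x₀ Tri := hmax hwK
  have h0 : 0 ≤ Metric.infDist x₀ Tri := Metric.infDist_nonneg
  have hzero : Metric.infDist x₀ Tri = 0 := by linarith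
  intro z hz
  have hle : Metric.infDist z Tri ≤ Metric.infDist x₀ Tri := hmax hz
  have : Metric.infDist z Tri = 0 := le_antisymm (by linarith) Metric.infDist_nonneg
  exact (Tri_closed.mem_iff_infDist_zero ⟨0, Tri_zero⟩).2 this

/-! ### continuity of Lstar on K -/

lemma maps_g (a : Fin 3) : Set.MapsTo (g a) (K ∩ g a ⁻¹' Tri) K := by
  rintro y ⟨hyK, hyT⟩
  obtain ⟨c, w, hwK, rfl⟩ := K_cover hK hyK
  by_cases hca : c = a
  · subst hca; rw [g_f]; exact hwK
  · have hcT : g c (f c w) ∈ Tri := by rw [g_f]; exact K_sub_Tri hK hwK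
    obtain ⟨-, h2⟩ := touch (Ne.intro hca) hcT hyT
    rw [h2]; exact p_mem_K hK c

lemma Step_contOn {L : ℂ → Fin 3 → ℝ} (hGL : Good L) (hLc : ContinuousOn L K) :
    ContinuousOn (Step L) K := by
  intro x hx
  have heps : ∀ b : Fin 3, ∃ ε > (0:ℝ), g b x ∉ Tri → ∀ y ∈ Metric.ball x ε, g b y ∉ Tri := by
    intro b
    by_cases hb : g b x ∈ Tri
    · exact ⟨1, one_pos, fun h => absurd hb h⟩
    · have hcl : IsClosed (g b ⁻¹' Tri) := Tri_closed.preimage (g_cont b)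
      obtain ⟨ε, hε, hball⟩ := Metric.isOpen_iff.1 hcl.isOpen_compl x hb
      exact ⟨ε, hε, fun _ y hy => hball hy⟩
  obtain ⟨ε0, hε0, h0⟩ := heps 0
  obtain ⟨ε1, hε1, h1⟩ := heps 1
  obtain ⟨ε2, hε2, h2⟩ := heps 2
  set ε := min ε0 (min ε1 ε2) with hεdef
  have hεpos : 0 < ε := lt_min hε0 (lt_min hε1 hε2)
  have hballs : ∀ b : Fin 3, Metric.ball x ε ⊆ Metric.ball x (if b = 0 then ε0 else if b = 1 then ε1 else ε2) := by
    intro b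
    apply Metric.ball_subset_ball
    rcases fin3cases b with rfl|rfl|rfl <;> simp (config := {decide := true}) [hεdef] <;>
      first
        | exact min_le_left _ _
        | exact le_trans (min_le_right _ _) (min_le_left _ _)
        | exact le_trans (min_le_right _ _) (min_le_right _ _)
  have havoid : ∀ b : Fin 3, g b x ∉ Tri → ∀ y ∈ Metric.ball x ε, g b y ∉ Tri := by
    intro b hb y hy
    rcases fin3cases b with rfl|rfl|rfl
    · exact h0 hb y (hballs 0 hy |>.trans_eq' rfl |> fun h => by simpa using h)
    · exact h1 hb y (by have := hballs 1 hy; simpa using this)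
    · exact h2 hb y (by have := hballs 2 hy; simpa using this)
  -- continuity within each piece
  have piece : ∀ a : Fin 3, g a x ∈ Tri → ContinuousWithinAt (Step L) (K ∩ g a ⁻¹' Tri) x := by
    intro a ha
    have hgc : ContinuousOn (fun y => L (g a y)) (K ∩ g a ⁻¹' Tri) :=
      hLc.comp (g_cont a).continuousOn (maps_g hK a)
    have hco : ContinuousOn (fun y => Mt a (L (g a y))) (K ∩ g a ⁻¹' Tri) := by
      apply continuousOn_pi.2
      intro j
      simp only [Mt_apply]
      exact ((continuousOn_const.mul ((continuous_apply (0:Fin 3)).comp_continuousOn hgc)).add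
        (continuousOn_const.mul ((continuous_apply (1:Fin 3)).comp_continuousOn hgc))).add
        (continuousOn_const.mul ((continuous_apply (2:Fin 3)).comp_continuousOn hgc))
    have hcongr : ContinuousOn (Step L) (K ∩ g a ⁻¹' Tri) := by
      apply ContinuousOn.congr hco
      intro y hy
      exact Step_branch hGL.2 hy.2
    exact hcongr x ⟨hx, ha⟩
  -- glue
  have hempty : ∀ (s : Set ℂ), s = ∅ → ContinuousWithinAt (Step L) s x := by
    rintro s rfl
    rw [ContinuousWithinAt, nhdsWithin_empty]
    exact tendsto_bot
  have hpieceball : ∀ a : Fin 3, ContinuousWithinAt (Step L)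
      (K ∩ g a ⁻¹' Tri ∩ Metric.ball x ε) x := by
    intro a
    by_cases ha : g a x ∈ Tri
    · exact (piece a ha).mono (by intro y hy; exact hy.1)
    · apply hempty
      ext y
      simp only [Set.mem_inter_iff, Set.mem_empty_iff_false, iff_false, not_and]
      rintro ⟨-, hyT⟩ hyb
      exact havoid a ha y hyb hyT
  have hcw : ContinuousWithinAt (Step L)
      ((K ∩ g 0 ⁻¹' Tri ∩ Metric.ball x ε) ∪ ((K ∩ g 1 ⁻¹' Tri ∩ Metric.ball x ε) ∪
        (K ∩ g 2 ⁻¹' Tri ∩ Metric.ball x ε))) x :=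
    (hpieceball 0).union ((hpieceball 1).union (hpieceball 2))
  have hsub : K ∩ Metric.ball x ε ⊆ (K ∩ g 0 ⁻¹' Tri ∩ Metric.ball x ε) ∪
      ((K ∩ g 1 ⁻¹' Tri ∩ Metric.ball x ε) ∪ (K ∩ g 2 ⁻¹' Tri ∩ Metric.ball x ε)) := by
    rintro y ⟨hyK, hyb⟩
    obtain ⟨c, w, hwK, rfl⟩ := K_cover hK hyK
    have hcT : g c (f c w) ∈ Tri := by rw [g_f]; exact K_sub_Tri hK hwK
    rcases fin3cases c with rfl|rfl|rfl
    · exact Or.inl ⟨⟨hyK, hcT⟩, hyb⟩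
    · exact Or.inr (Or.inl ⟨⟨hyK, hcT⟩, hyb⟩)
    · exact Or.inr (Or.inr ⟨⟨hyK, hcT⟩, hyb⟩)
  have : ContinuousWithinAt (Step L) (K ∩ Metric.ball x ε) x := hcw.mono hsub
  exact (continuousWithinAt_inter (Metric.ball_mem_nhds x hεpos)).1 this

lemma Lseq_contOn (n : ℕ) : ContinuousOn (Lseq n) K := by
  induction n with
  | zero => exact (continuous_pi L0_cont).continuousOn
  | succ n ih => rw [Lseq_succ]; exact Step_contOn hK (Lseq_good n) ih

lemma Lstar_contOn (k : Fin 3) : ContinuousOn (fun x => Lstar x k) K := by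
  have huni : TendstoUniformlyOn (fun n x => Lseq n x k) (fun x => Lstar x k) atTop K := by
    rw [Metric.tendstoUniformlyOn_iff]
    intro ε hε
    have hlim : Tendsto (fun n : ℕ => (3/5:ℝ)^n * (5/2)) atTop (𝓝 0) := by
      have h1 : Tendsto (fun n : ℕ => (3/5:ℝ)^n) atTop (𝓝 0) :=
        tendsto_pow_atTop_nhds_zero_of_lt_one (by norm_num) (by norm_num)
      have := h1.mul_const (5/2:ℝ)
      rwa [zero_mul] at this
    have hev : ∀ᶠ n in atTop, (3/5:ℝ)^n * (5/2) < ε :=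
      (hlim.eventually (eventually_lt_nhds hε)).mono (fun n hn => hn)
    filter_upwards [hev] with n hn x _
    rw [Real.dist_eq, abs_sub_comm]
    exact lt_of_le_of_lt (Lstar_tail n x k) hn
  exact huni.continuousOn (Eventually.of_forall (f := atTop) fun n =>
    (continuous_apply k).comp_continuousOn (Lseq_contOn hK n)).frequently

end K

/-! ### helpers on Fin 3 sums -/

lemma sum_perm {a b : Fin 3} (h : a ≠ b) (u : Fin 3 → ℝ) :
    u a + u b + u (other a b) = u 0 + u 1 + u 2 := by
  revert h
  rcases fin3cases a with rfl|rfl|rfl <;> rcases fin3cases b with rfl|rfl|rfl <;> intro h <;>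
    first
      | exact absurd rfl h
      | (simp only [show other 0 1 = 2 from by decide, show other 1 0 = 2 from by decide,
          show other 0 2 = 1 from by decide, show other 2 0 = 1 from by decide,
          show other 1 2 = 0 from by decide, show other 2 1 = 0 from by decide]<;> ring)

lemma eq_e_of {a : Fin 3} {u : Fin 3 → ℝ} (hu : inDelta u) (h1 : u a = 1) : u = e a := by
  have h0 := hu.1 0; have h01 := hu.1 1; have h02 := hu.1 2
  have hs := hu.2
  funext j
  rcases fin3cases a with rfl|rfl|rfl <;> rcases fin3cases j with rfl|rfl|rfl <;>
    simp (config := {decide := true}) [e] <;> linarith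

lemma two_comp_le_one {u : Fin 3 → ℝ} (hu : inDelta u) {i j : Fin 3} (h : i ≠ j) :
    u i + u j ≤ 1 := by
  have h0 := hu.1 0; have h01 := hu.1 1; have h02 := hu.1 2
  have hs := hu.2
  revert h
  rcases fin3cases i with rfl|rfl|rfl <;> rcases fin3cases j with rfl|rfl|rfl <;> intro h <;>
    first | exact absurd rfl h | linarith

section K2
variable {K : Set ℂ} (hK : IsSG K)
include hK

lemma Lstar_eq_e {a : Fin 3} : ∀ {z}, z ∈ K → Lstar z = e a → z = p a := by
  have step : ∀ z, z ∈ K → Lstar z = e a → g a z ∈ K ∧ Lstar (g a z) = e a := by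
    intro z hz hLz
    obtain ⟨c, w, hwK, rfl⟩ := K_cover hK hz
    have hwT : w ∈ Tri := K_sub_Tri hK hwK
    have hfw : Lstar (f c w) = Mt c (Lstar w) := Lstar_f c hwT
    by_cases hca : c = a
    · subst hca
      refine ⟨by rw [g_f]; exact hwK, ?_⟩
      rw [g_f]
      apply Mt_inj (a := c)
      rw [← hfw, hLz, Mt_e_self]
    · exfalso
      have hd := Lstar_delta w
      have h1 : Lstar (f c w) a = (2 * Lstar w a + Lstar w (other a c))/5 := by
        rw [hfw]; exact Mt_off (fun h => hca h.symm) _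
      rw [hLz] at h1
      have ha : e a a = 1 := by simp [e]
      have hb1 := comp_le_one hd a
      have hb2 := comp_le_one hd (other a c)
      rw [ha] at h1; linarith
  intro z hz hLz
  by_contra hne
  have hiter : ∀ n : ℕ, ∃ w, w ∈ K ∧ Lstar w = e a ∧ w - p a = 2^n * (z - p a) := by
    intro n; induction n with
    | zero => exact ⟨z, hz, hLz, by rw [pow_zero, one_mul]⟩
    | succ n ih =>
      obtain ⟨w, hwK, hwL, hwe⟩ := ih
      obtain ⟨h1, h2⟩ := step w hwK hwL
      refine ⟨g a w, h1, h2, ?_⟩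
      rw [show g a w = 2*w - p a from rfl, pow_succ]
      linear_combination (2:ℂ) * hwe
  have hd : 0 < ‖z - p a‖ := by
    rw [norm_pos_iff]
    exact sub_ne_zero.2 hne
  obtain ⟨n, hn⟩ := exists_pow_lt_of_lt_one (div_pos hd (by norm_num : (0:ℝ) < 6))
    (by norm_num : (1:ℝ)/2 < 1)
  rw [div_pow, one_pow, div_lt_div_iff₀ (by positivity) (by norm_num)] at hn
  obtain ⟨w, hwK, -, hwe⟩ := hiter n
  have h6 : dist w (p a) ≤ 6 := Tri_dist_le (K_sub_Tri hK hwK) (p_mem_Tri a)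
  have habs : ‖w - p a‖ = 2^n * ‖z - p a‖ := by
    rw [hwe, norm_mul, norm_pow, Complex.norm_two]
  rw [Complex.dist_eq, habs] at h6
  nlinarith

lemma Lstar_inj : ∀ x ∈ K, ∀ y ∈ K, Lstar x = Lstar y → x = y := by
  by_contra hcon
  push_neg at hcon
  obtain ⟨x, hx, y, hy, hL, hne⟩ := hcon
  set B : Set (ℂ × ℂ) := {q | q.1 ∈ K ∧ q.2 ∈ K ∧ q.1 ≠ q.2 ∧ Lstar q.1 = Lstar q.2} with hB
  set D : Set ℝ := (fun q : ℂ × ℂ => dist q.1 q.2) '' B with hD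
  have hxyB : ((x, y) : ℂ × ℂ) ∈ B := ⟨hx, hy, hne, hL⟩
  have hDne : D.Nonempty := ⟨_, ⟨(x, y), hxyB, rfl⟩⟩
  have hDbdd : BddAbove D := by
    refine ⟨6, ?_⟩
    rintro d ⟨⟨a1, a2⟩, ⟨h1, h2, -, -⟩, rfl⟩
    exact Tri_dist_le (K_sub_Tri hK h1) (K_sub_Tri hK h2)
  set s := sSup D with hs
  have hspos : 0 < s := lt_of_lt_of_le (dist_pos.2 hne) (le_csSup hDbdd ⟨(x, y), hxyB, rfl⟩)
  obtain ⟨d, hdD, hds⟩ := exists_lt_of_lt_csSup hDne (by linarith : s/2 < s)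
  obtain ⟨⟨x', y'⟩, ⟨hx', hy', hne', hL'⟩, rfl⟩ := hdD
  have hds' : s/2 < dist x' y' := hds
  replace hx' : x' ∈ K := hx'
  replace hy' : y' ∈ K := hy'
  replace hne' : x' ≠ y' := hne'
  replace hL' : Lstar x' = Lstar y' := hL'
  -- no common cell
  have hnc : ¬ ∃ c w₁ w₂, w₁ ∈ K ∧ w₂ ∈ K ∧ x' = f c w₁ ∧ y' = f c w₂ := by
    rintro ⟨c, w1, w2, hw1, hw2, he1, he2⟩
    have hL2 : Lstar w1 = Lstar w2 := by
      apply Mt_inj (a := c)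
      rw [← Lstar_f c (K_sub_Tri hK hw1), ← Lstar_f c (K_sub_Tri hK hw2), ← he1, ← he2]
      exact hL'
    have hne2 : w1 ≠ w2 := fun h => hne' (by rw [he1, he2, h])
    have hle : dist w1 w2 ≤ s := le_csSup hDbdd ⟨(w1, w2), ⟨hw1, hw2, hne2, hL2⟩, rfl⟩
    have hfd : dist x' y' = dist w1 w2 / 2 := by rw [he1, he2, f_dist]
    linarith [hds', hle, hfd]
  obtain ⟨a, xx, hxxK, hxe⟩ := K_cover hK hx'
  obtain ⟨b, yy, hyyK, hye⟩ := K_cover hK hy'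
  have hab : a ≠ b := by
    rintro rfl
    exact hnc ⟨a, xx, yy, hxxK, hyyK, hxe, hye⟩
  set u := Lstar xx with hu
  set u' := Lstar yy with hu'
  have hud := Lstar_delta xx
  have hu'd := Lstar_delta yy
  have hxa : Lstar x' a = 2/5 + 3/5 * u a := by
    rw [hxe, Lstar_f a (K_sub_Tri hK hxxK)]
    exact Mt_diag u hud.2
  have hyb : Lstar y' a = (2 * u' a + u' (other a b))/5 := by
    rw [hye, Lstar_f b (K_sub_Tri hK hyyK)]
    exact Mt_off hab u'
  have heq : Lstar x' a = Lstar y' a := by rw [hL']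
  set t := other a b with ht
  have hta : t ≠ a := (other_ne hab).1
  have h2c : u' a + u' t ≤ 1 := two_comp_le_one hu'd (Ne.symm hta)
  have hua0 : u a = 0 ∧ u' a = 1 ∧ u' t = 0 := by
    have h1 := hud.1 a
    have h2 := hu'd.1 a
    have h3 := hu'd.1 t
    have h4 := comp_le_one hu'd a
    rw [hxa, hyb] at heq
    refine ⟨by linarith, by linarith, by linarith⟩
  have hu'e : u' = e a := eq_e_of hu'd hua0.2.1
  have hyyp : yy = p a := Lstar_eq_e hK hyyK hu'e
  -- the x side
  obtain ⟨c, ww, hwwK, hwe⟩ := K_cover hK hxxK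
  have hwT := K_sub_Tri hK hwwK
  have hcu : u = Mt c (Lstar ww) := by rw [hu, hwe]; exact Lstar_f c hwT
  have hwd := Lstar_delta ww
  by_cases hca : c = a
  · subst hca
    have hdg : u c = 2/5 + 3/5 * Lstar ww c := by rw [hcu]; exact Mt_diag _ hwd.2
    have := hwd.1 c
    linarith [hua0.1]
  · have hac : a ≠ c := fun h => hca h.symm
    have h1 : u a = (2 * Lstar ww a + Lstar ww (other a c))/5 := by
      rw [hcu]; exact Mt_off hac _
    have hz1 : Lstar ww a = 0 := by
      have := hwd.1 a; have := hwd.1 (other a c); linarith [hua0.1]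
    have hz2 : Lstar ww (other a c) = 0 := by
      have := hwd.1 a; have := hwd.1 (other a c); linarith [hua0.1]
    have hsumP := sum_perm hac (Lstar ww)
    have hc1 : Lstar ww c = 1 := by have := hwd.2; linarith
    have hwwp : ww = p c := Lstar_eq_e hK hwwK (eq_e_of hwd hc1)
    apply hnc
    refine ⟨a, p c, p b, p_mem_K hK c, p_mem_K hK b, ?_, ?_⟩
    · rw [hxe, hwe, hwwp, f_fix]
    · rw [hye, hyyp]; unfold f; ring

end K2

/-! ### the harmonic identities -/

lemma fwl_cons (i : Fin 3) (w : List (Fin 3)) (z : ℂ) : fwl (i :: w) z = f i (fwl w z) := rfl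

lemma fwl_mem_Tri (w : List (Fin 3)) {z : ℂ} (hz : z ∈ Tri) : fwl w z ∈ Tri := by
  induction w with
  | nil => exact hz
  | cons i w ih => rw [fwl_cons]; exact f_maps_Tri ih i

lemma mid_eq (i j : Fin 3) : (p i + p j)/2 = f i (p j) := by unfold f; ring

lemma mid_mem_Tri (i j : Fin 3) : (p i + p j)/2 ∈ Tri := by
  rw [mid_eq]; exact f_maps_Tri (p_mem_Tri j) i

lemma Lstar_harm (w : List (Fin 3)) {i j : Fin 3} (hij : i ≠ j) (k : Fin 3) :
    Lstar (fwl w ((p i + p j)/2)) k =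
      (2 * Lstar (fwl w (p i)) k + 2 * Lstar (fwl w (p j)) k
        + Lstar (fwl w (p (other i j))) k)/5 := by
  induction w generalizing k with
  | nil =>
    show Lstar ((p i + p j)/2) k = (2 * Lstar (p i) k + 2 * Lstar (p j) k
      + Lstar (p (other i j)) k)/5
    rw [mid_eq, Lstar_f i (p_mem_Tri j), Lstar_pin, Mt_e, Lstar_pin, Lstar_pin]
    exact entry_mid hij k
  | cons a w ih =>
    rw [fwl_cons, fwl_cons, fwl_cons, fwl_cons,
      Lstar_f a (fwl_mem_Tri w (mid_mem_Tri i j)),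
      Lstar_f a (fwl_mem_Tri w (p_mem_Tri i)),
      Lstar_f a (fwl_mem_Tri w (p_mem_Tri j)),
      Lstar_f a (fwl_mem_Tri w (p_mem_Tri (other i j))),
      Mt_apply, Mt_apply, Mt_apply, Mt_apply, ih 0, ih 1, ih 2]
    ring


theorem statement8 (K : Set ℂ) (hK : IsSG K) :
    ∀ x ∈ K, ∀ y ∈ K, x ≠ y →
      ∃ (x0 x1 x2 : ℝ) (U : ℂ → ℝ), IsHarm K x0 x1 x2 U ∧ U x ≠ U y := by
  intro x hx y hy hxy
  have hLne : Lstar x ≠ Lstar y := fun h => hxy (Lstar_inj hK x hx y hy h)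
  obtain ⟨k, hk⟩ := Function.ne_iff.1 hLne
  refine ⟨e 0 k, e 1 k, e 2 k, fun z => Lstar z k, ⟨?_, ?_, ?_, ?_, ?_⟩, hk⟩
  · exact Lstar_contOn hK k
  · show Lstar (p 0) k = e 0 k; rw [Lstar_pin]
  · show Lstar (p 1) k = e 1 k; rw [Lstar_pin]
  · show Lstar (p 2) k = e 2 k; rw [Lstar_pin]
  · intro w i j hij
    exact Lstar_harm w hij k

end SG
end
end

section
/- Let (x_n)_{n≥1} be a sequence of nonnegative real numbers. Then, with all quantities taken in [0,∞]: liminf_{n→∞} x_n ≤ liminf_{λ→1⁻} (1−λ)·Σ_{n=1}^∞ λⁿ x_n ≤ limsup_{λ→1⁻} (1−λ)·Σ_{n=1}^∞ λⁿ x_n ≤ limsup_{n→∞} x_n ≤ sup_{n≥1} x_n. -/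
open Filter Set
open scoped ENNReal

lemma key_geom (c : ℝ≥0∞) (N : ℕ) {lam : ℝ} (h0 : 0 ≤ lam) (h1 : lam < 1) :
    ENNReal.ofReal (1 - lam) * ∑' n : ℕ, ENNReal.ofReal lam ^ (n + N + 1) * c
      = ENNReal.ofReal lam ^ (N + 1) * c := by
  set mu := ENNReal.ofReal lam with hmu
  have hmu1 : mu < 1 := ENNReal.ofReal_lt_one.2 h1
  have hsub : ENNReal.ofReal (1 - lam) = 1 - mu := by
    rw [ENNReal.ofReal_sub _ h0, ENNReal.ofReal_one]
  have hre : ∀ n : ℕ, mu ^ (n + N + 1) * c = mu ^ n * (mu ^ (N+1) * c) := by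
    intro n; ring
  rw [hsub]
  simp only [hre]
  rw [ENNReal.tsum_mul_right, ENNReal.tsum_geometric, ← mul_assoc, ← mul_assoc,
    ENNReal.mul_inv_cancel, one_mul]
  · exact (tsub_pos_of_lt hmu1).ne'
  · exact (lt_of_le_of_lt tsub_le_self ENNReal.one_lt_top).ne

lemma term_eq (x : ℕ → ℝ) {lam : ℝ} (h0 : 0 ≤ lam) (n : ℕ) :
    ENNReal.ofReal (lam ^ (n+1) * x (n+1))
      = ENNReal.ofReal lam ^ (n+1) * ENNReal.ofReal (x (n+1)) := by
  rw [ENNReal.ofReal_mul (pow_nonneg h0 _), ENNReal.ofReal_pow h0]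

/-- For a sequence `(x_n)_{n≥1}` of nonnegative reals (here `x (n+1)` plays the role
of the `n`-th term, `n ≥ 1`), with all quantities in `[0,∞]`:
`liminf_n x_n ≤ liminf_{λ→1⁻} (1−λ) Σ_{n≥1} λⁿ x_n
 ≤ limsup_{λ→1⁻} (1−λ) Σ_{n≥1} λⁿ x_n ≤ limsup_n x_n ≤ sup_{n≥1} x_n`. -/
theorem statement16 (x : ℕ → ℝ) (hx : ∀ n, 0 ≤ x n) :
    liminf (fun n : ℕ => ENNReal.ofReal (x (n+1))) atTop ≤
      liminf (fun lam : ℝ =>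
        ENNReal.ofReal (1 - lam) * ∑' n : ℕ, ENNReal.ofReal (lam ^ (n+1) * x (n+1)))
        (nhdsWithin 1 (Set.Iio 1)) ∧
    liminf (fun lam : ℝ =>
        ENNReal.ofReal (1 - lam) * ∑' n : ℕ, ENNReal.ofReal (lam ^ (n+1) * x (n+1)))
        (nhdsWithin 1 (Set.Iio 1)) ≤
      limsup (fun lam : ℝ =>
        ENNReal.ofReal (1 - lam) * ∑' n : ℕ, ENNReal.ofReal (lam ^ (n+1) * x (n+1)))
        (nhdsWithin 1 (Set.Iio 1)) ∧
    limsup (fun lam : ℝ =>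
        ENNReal.ofReal (1 - lam) * ∑' n : ℕ, ENNReal.ofReal (lam ^ (n+1) * x (n+1)))
        (nhdsWithin 1 (Set.Iio 1)) ≤
      limsup (fun n : ℕ => ENNReal.ofReal (x (n+1))) atTop ∧
    limsup (fun n : ℕ => ENNReal.ofReal (x (n+1))) atTop ≤
      ⨆ n : ℕ, ENNReal.ofReal (x (n+1)) := by
  set y : ℕ → ℝ≥0∞ := fun n => ENNReal.ofReal (x (n+1)) with hy
  set F : ℝ → ℝ≥0∞ := fun lam =>
    ENNReal.ofReal (1 - lam) * ∑' n : ℕ, ENNReal.ofReal (lam ^ (n+1) * x (n+1)) with hF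
  have hIoo : ∀ᶠ lam : ℝ in nhdsWithin 1 (Set.Iio 1), lam ∈ Ioo (0:ℝ) 1 :=
    eventually_of_mem (Ioo_mem_nhdsLT_of_mem (by norm_num : (1:ℝ) ∈ Ioc 0 1)) (fun _ h => h)
  have htendsto_mu : ∀ N : ℕ, Tendsto (fun lam : ℝ => ENNReal.ofReal lam ^ (N+1))
      (nhdsWithin 1 (Set.Iio 1)) (nhds 1) := by
    intro N
    have h1 : Tendsto (fun lam : ℝ => ENNReal.ofReal lam)
        (nhdsWithin 1 (Set.Iio 1)) (nhds 1) := by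
      simpa using (ENNReal.continuous_ofReal.tendsto 1).mono_left nhdsWithin_le_nhds
    simpa [Function.comp_def] using (ENNReal.continuous_pow (N+1)).continuousAt.tendsto.comp h1
  refine ⟨?_, liminf_le_limsup, ?_, limsup_le_iSup⟩
  · -- liminf y ≤ liminf F
    refine le_of_forall_lt_imp_le_of_dense fun b hb => ?_
    obtain ⟨N, hN⟩ := eventually_atTop.1 (eventually_lt_of_lt_liminf hb)
    have hev : ∀ᶠ lam in nhdsWithin (1:ℝ) (Set.Iio 1),
        ENNReal.ofReal lam ^ (N+1) * b ≤ F lam := by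
      filter_upwards [hIoo] with lam hlam
      obtain ⟨h0, h1⟩ := hlam
      have h0' := h0.le
      calc ENNReal.ofReal lam ^ (N+1) * b
          = ENNReal.ofReal (1 - lam) * ∑' n : ℕ, ENNReal.ofReal lam ^ (n + N + 1) * b :=
            (key_geom b N h0' h1).symm
        _ ≤ ENNReal.ofReal (1 - lam) *
              ∑' n : ℕ, ENNReal.ofReal (lam ^ ((n + N) + 1) * x ((n + N) + 1)) := by
            gcongr with n
            rw [term_eq x h0']
            exact mul_le_mul_right (hN (n + N) (Nat.le_add_left N n)).le _
        _ ≤ F lam := by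
            simp only [hF]
            refine mul_le_mul_right ?_ _
            rw [← Summable.sum_add_tsum_nat_add' (f := fun n => ENNReal.ofReal (lam ^ (n+1) * x (n+1)))
              (k := N) ENNReal.summable]
            exact le_add_self
    have hlim : Tendsto (fun lam : ℝ => ENNReal.ofReal lam ^ (N+1) * b)
        (nhdsWithin 1 (Set.Iio 1)) (nhds b) := by
      simpa using ENNReal.Tendsto.mul_const (htendsto_mu N) (Or.inl one_ne_zero)
    have hle := liminf_le_liminf hev
    rwa [hlim.liminf_eq] at hle
  · -- limsup F ≤ limsup y
    refine le_of_forall_gt_imp_ge_of_dense fun b hb => ?_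
    rcases eq_or_ne b ⊤ with rfl | hbtop
    · exact le_top
    obtain ⟨N, hN⟩ := eventually_atTop.1 (eventually_lt_of_limsup_lt hb)
    set C : ℝ≥0∞ := ∑ i ∈ Finset.range N, y i with hC
    have hCtop : C ≠ ⊤ := by
      exact (ENNReal.sum_lt_top.2 fun i _ => ENNReal.ofReal_lt_top).ne
    have hev : ∀ᶠ lam in nhdsWithin (1:ℝ) (Set.Iio 1),
        F lam ≤ ENNReal.ofReal (1 - lam) * C + b := by
      filter_upwards [hIoo] with lam hlam
      obtain ⟨h0, h1⟩ := hlam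
      have h0' := h0.le
      have hmu1 : ENNReal.ofReal lam ≤ 1 := (ENNReal.ofReal_lt_one.2 h1).le
      simp only [hF]
      rw [← Summable.sum_add_tsum_nat_add' (f := fun n => ENNReal.ofReal (lam ^ (n+1) * x (n+1)))
        (k := N) ENNReal.summable, mul_add]
      gcongr
      · -- head
        refine Finset.sum_le_sum fun i _ => ?_
        rw [term_eq x h0']
        calc ENNReal.ofReal lam ^ (i+1) * y i ≤ 1 * y i := by
              gcongr
              exact pow_le_one' hmu1 _
          _ = y i := one_mul _
      · -- tail
        calc ENNReal.ofReal (1 - lam) *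
              ∑' n : ℕ, ENNReal.ofReal (lam ^ ((n + N) + 1) * x ((n + N) + 1))
            ≤ ENNReal.ofReal (1 - lam) * ∑' n : ℕ, ENNReal.ofReal lam ^ (n + N + 1) * b := by
              gcongr with n
              rw [term_eq x h0']
              exact mul_le_mul_right (hN (n + N) (Nat.le_add_left N n)).le _
          _ = ENNReal.ofReal lam ^ (N+1) * b := key_geom b N h0' h1
          _ ≤ 1 * b := by gcongr; exact pow_le_one' hmu1 _
          _ = b := one_mul _
    have hlim : Tendsto (fun lam : ℝ => ENNReal.ofReal (1 - lam) * C + b)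
        (nhdsWithin 1 (Set.Iio 1)) (nhds b) := by
      have h0 : Tendsto (fun lam : ℝ => ENNReal.ofReal (1 - lam))
          (nhdsWithin 1 (Set.Iio 1)) (nhds 0) := by
        have hcont : Continuous (fun lam : ℝ => ENNReal.ofReal (1 - lam)) :=
          ENNReal.continuous_ofReal.comp (continuous_const.sub continuous_id)
        have h2 : Tendsto (fun lam : ℝ => ENNReal.ofReal (1 - lam)) (nhds 1) (nhds 0) := by
          simpa using hcont.tendsto (1:ℝ)
        exact h2.mono_left nhdsWithin_le_nhds
      have h1 : Tendsto (fun lam : ℝ => ENNReal.ofReal (1 - lam) * C)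
          (nhdsWithin 1 (Set.Iio 1)) (nhds 0) := by
        simpa using ENNReal.Tendsto.mul_const h0 (Or.inr hCtop)
      simpa using h1.add tendsto_const_nhds
    have hle := limsup_le_limsup hev
    rwa [hlim.limsup_eq] at hle
end
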